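/- Let b > 2. There are no nontrivial classical solutions: if f, ω are continuous on (0,1), ω(x) = Ω(x)(1-x²)^{(1-b)/2} with Ω(x) → C_ω ≠ 0 as x → 1⁻, f(1⁻) = 0, and on any interval where f ≠ 0 we have ω = c|f|^{(1-b)/(2-b)} with c > 0, and on any interval where f ≡ 0 we have Ω constant, then f ≡ 0 on (0,1). -/

import Mathlib

open Real Set Filter

private lemma aux_tendsto_rpow {α c : ℝ} (hα : 0 < α) {g : ℝ → ℝ} {l : Filter ℝ}
    (hg : Tendsto g l (nhds 0)) :
    Tendsto (fun x => c * |g x| ^ α) l (nhds 0) := by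
  have h1 : Tendsto (fun x => |g x|) l (nhds 0) := by simpa using hg.abs
  have h2 : ContinuousAt (fun t : ℝ => t ^ α) 0 :=
    Real.continuousAt_rpow_const 0 α (Or.inr hα.le)
  have h3 : Tendsto (fun x => |g x| ^ α) l (nhds 0) := by
    have := h2.tendsto.comp h1
    simpa [Function.comp_def, Real.zero_rpow hα.ne'] using this
  simpa using h3.const_mul c

theorem stmt_13 (b Cω : ℝ) (hb : 2 < b) (hCω : Cω ≠ 0) (f ω Ω : ℝ → ℝ)
    (hfc : ContinuousOn f (Ioo 0 1)) (hωc : ContinuousOn ω (Ioo 0 1))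
    (hωΩ : ∀ x ∈ Ioo (0:ℝ) 1, ω x = Ω x * (1 - x^2) ^ ((1-b)/2))
    (hΩlim : Tendsto Ω (nhdsWithin 1 (Iio 1)) (nhds Cω))
    (hflim : Tendsto f (nhdsWithin 1 (Iio 1)) (nhds 0))
    (hpow : ∀ s t : ℝ, Ioo s t ⊆ Ioo (0:ℝ) 1 → (∀ x ∈ Ioo s t, f x ≠ 0) →
      ∃ c > (0:ℝ), ∀ x ∈ Ioo s t, ω x = c * |f x| ^ ((1-b)/(2-b)))
    (hconst : ∀ s t : ℝ, Ioo s t ⊆ Ioo (0:ℝ) 1 → (∀ x ∈ Ioo s t, f x = 0) →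
      ∃ C : ℝ, ∀ x ∈ Ioo s t, Ω x = C) :
    ∀ x ∈ Ioo (0:ℝ) 1, f x = 0 := by
  by_contra hcon
  push_neg at hcon
  obtain ⟨x₀, hx₀, hfx₀⟩ := hcon
  have hα : 0 < (1-b)/(2-b) := div_pos_of_neg_of_neg (by linarith) (by linarith)
  -- Ω in terms of ω
  have hΩeq : ∀ x ∈ Ioo (0:ℝ) 1, Ω x = ω x * (1 - x^2) ^ ((b-1)/2) := by
    intro x hx
    have hpos : (0:ℝ) < 1 - x^2 := by nlinarith [hx.1, hx.2]
    rw [hωΩ x hx, mul_assoc, ← Real.rpow_add hpos]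
    have h0 : (1-b)/2 + (b-1)/2 = 0 := by ring
    rw [h0, Real.rpow_zero, mul_one]
  have hΩc : ContinuousOn Ω (Ioo (0:ℝ) 1) := by
    have hcont : ContinuousOn (fun x => ω x * (1 - x^2) ^ ((b-1)/2)) (Ioo (0:ℝ) 1) := by
      apply hωc.mul
      apply ContinuousOn.rpow_const (by fun_prop)
      intro x hx
      exact Or.inl (by nlinarith [hx.1, hx.2])
    exact hcont.congr hΩeq
  -- Key lemma: a first zero after a nonzero point gives a zero of Ω
  have hK : ∀ y ∈ Ioo (0:ℝ) 1, f y ≠ 0 → ∀ z ∈ Ioo y 1, f z = 0 →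
      ∃ v ∈ Ioc y z, Ω v = 0 := by
    intro y hy hfy z hz hfz
    set Z : Set ℝ := Icc y z ∩ f ⁻¹' {0} with hZdef
    have hsub : Icc y z ⊆ Ioo (0:ℝ) 1 := fun t ht => ⟨lt_of_lt_of_le hy.1 ht.1, lt_of_le_of_lt ht.2 hz.2⟩
    have hZclosed : IsClosed Z :=
      (hfc.mono hsub).preimage_isClosed_of_isClosed isClosed_Icc isClosed_singleton
    have hZne : z ∈ Z := ⟨⟨hz.1.le, le_refl z⟩, hfz⟩
    have hbdd : BddBelow Z := (bddBelow_Icc (a := z) (b := y)).mono inter_subset_left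
    set v := sInf Z with hvdef
    have hvZ : v ∈ Z := hZclosed.csInf_mem ⟨z, hZne⟩ hbdd
    obtain ⟨⟨hvy, hvz⟩, hfv⟩ := hvZ
    have hfv : f v = 0 := hfv
    have hyv : y < v := lt_of_le_of_ne hvy (fun h => hfy (by rw [h]; exact hfv))
    have hv1 : v < 1 := lt_of_le_of_lt hvz hz.2
    have hvmem : v ∈ Ioo (0:ℝ) 1 := ⟨lt_trans hy.1 hyv, hv1⟩
    have hne : ∀ x ∈ Ioo y v, f x ≠ 0 := by
      intro x hx hx0
      have : v ≤ x := csInf_le hbdd ⟨⟨hx.1.le, hx.2.le.trans hvz⟩, hx0⟩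
      linarith [hx.2]
    obtain ⟨c, hc0, hc⟩ := hpow y v
      (fun x hx => ⟨lt_trans hy.1 hx.1, lt_trans hx.2 hv1⟩) hne
    have hNB : (nhdsWithin v (Ioo y v)).NeBot := by
      rw [← mem_closure_iff_nhdsWithin_neBot, closure_Ioo hyv.ne]
      exact ⟨hyv.le, le_refl v⟩
    have hfcont : Tendsto f (nhdsWithin v (Ioo y v)) (nhds 0) := by
      have := (hfc.continuousAt (isOpen_Ioo.mem_nhds hvmem)).tendsto
      rw [hfv] at this
      exact this.mono_left nhdsWithin_le_nhds
    have ht2 : Tendsto ω (nhdsWithin v (Ioo y v)) (nhds 0) := by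
      have := aux_tendsto_rpow (c := c) hα hfcont
      apply this.congr'
      filter_upwards [eventually_mem_nhdsWithin] with x hx
      exact (hc x hx).symm
    have ht1 : Tendsto ω (nhdsWithin v (Ioo y v)) (nhds (ω v)) :=
      ((hωc.continuousAt (isOpen_Ioo.mem_nhds hvmem)).tendsto).mono_left nhdsWithin_le_nhds
    have hωv : ω v = 0 := tendsto_nhds_unique ht1 ht2
    have hpos : (0:ℝ) < 1 - v^2 := by nlinarith [hvmem.1, hvmem.2]
    have hrp : (0:ℝ) < (1 - v^2) ^ ((1-b)/2) := Real.rpow_pos_of_pos hpos _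
    have := hωΩ v hvmem
    rw [hωv] at this
    refine ⟨v, ⟨hyv, hvz⟩, ?_⟩
    rcases mul_eq_zero.mp this.symm with h | h
    · exact h
    · exact absurd h hrp.ne'
  -- Case (i): f nonzero on an interval touching 1
  by_cases hcase1 : ∃ s ∈ Ioo (0:ℝ) 1, ∀ x ∈ Ioo s 1, f x ≠ 0
  · obtain ⟨s, hs, hne⟩ := hcase1
    obtain ⟨c, hc0, hc⟩ := hpow s 1 (fun x hx => ⟨lt_trans hs.1 hx.1, hx.2⟩) hne
    have hIoo : Ioo s 1 ∈ nhdsWithin (1:ℝ) (Iio 1) :=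
      Ioo_mem_nhdsLT hs.2
    have h1 : Tendsto ω (nhdsWithin (1:ℝ) (Iio 1)) (nhds 0) := by
      apply (aux_tendsto_rpow (c := c) hα hflim).congr'
      filter_upwards [hIoo] with x hx
      exact (hc x hx).symm
    have h2 : Tendsto (fun x : ℝ => (1 - x^2) ^ ((b-1)/2)) (nhdsWithin (1:ℝ) (Iio 1)) (nhds 0) := by
      have hbase : Tendsto (fun x : ℝ => 1 - x^2) (nhds 1) (nhds 0) := by
        have : Continuous fun x : ℝ => 1 - x^2 := by fun_prop
        simpa using this.tendsto 1
      have h2' : ContinuousAt (fun t : ℝ => t ^ ((b-1)/2)) 0 :=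
        Real.continuousAt_rpow_const 0 _ (Or.inr (by linarith))
      have hbase' : Tendsto (fun x : ℝ => 1 - x^2) (nhdsWithin (1:ℝ) (Iio 1)) (nhds 0) :=
        hbase.mono_left nhdsWithin_le_nhds
      have := h2'.tendsto.comp hbase'
      simpa [Function.comp_def, Real.zero_rpow (show (b-1)/2 ≠ 0 by
        have : (0:ℝ) < (b-1)/2 := by linarith
        exact this.ne')] using this
    have h3 : Tendsto Ω (nhdsWithin (1:ℝ) (Iio 1)) (nhds 0) := by
      have := h1.mul h2
      rw [mul_zero] at this
      apply this.congr'
      filter_upwards [Ioo_mem_nhdsLT (show (1:ℝ) ∈ Ioc (0:ℝ) 1 by norm_num).1] with x hx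
      exact (hΩeq x hx).symm
    exact hCω (tendsto_nhds_unique hΩlim h3)
  -- otherwise, zeros accumulate at 1
  push_neg at hcase1
  by_cases hcase2 : ∃ s ∈ Ioo (0:ℝ) 1, ∀ x ∈ Ioo s 1, f x = 0
  · -- Case (ii): f vanishes on an interval touching 1
    obtain ⟨s₀, hs₀, hs₀z⟩ := hcase2
    set S : Set ℝ := {s | x₀ ≤ s ∧ ∀ x ∈ Ioo s 1, f x = 0} with hSdef
    have hs₀S : s₀ ∈ S := by
      refine ⟨?_, hs₀z⟩
      by_contra hlt
      push_neg at hlt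
      exact hfx₀ (hs₀z x₀ ⟨hlt, hx₀.2⟩)
    have hSbdd : BddBelow S := ⟨x₀, fun s hs => hs.1⟩
    set x₁ := sInf S with hx₁def
    have hx₁ge : x₀ ≤ x₁ := le_csInf ⟨s₀, hs₀S⟩ (fun s hs => hs.1)
    have hx₁lt : x₁ < 1 := lt_of_le_of_lt (csInf_le hSbdd hs₀S) hs₀.2
    have hx₁mem : x₁ ∈ Ioo (0:ℝ) 1 := ⟨lt_of_lt_of_le hx₀.1 hx₁ge, hx₁lt⟩
    have hzero : ∀ x ∈ Ioo x₁ 1, f x = 0 := by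
      intro x hx
      obtain ⟨s, hsS, hsx⟩ := exists_lt_of_csInf_lt ⟨s₀, hs₀S⟩ hx.1
      exact hsS.2 x ⟨hsx, hx.2⟩
    have hNBr : (nhdsWithin x₁ (Ioo x₁ 1)).NeBot := by
      rw [← mem_closure_iff_nhdsWithin_neBot, closure_Ioo hx₁lt.ne]
      exact ⟨le_refl x₁, hx₁lt.le⟩
    have hfx₁ : f x₁ = 0 := by
      have ht1 : Tendsto f (nhdsWithin x₁ (Ioo x₁ 1)) (nhds (f x₁)) :=
        ((hfc.continuousAt (isOpen_Ioo.mem_nhds hx₁mem)).tendsto).mono_left nhdsWithin_le_nhds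
      have ht2 : Tendsto f (nhdsWithin x₁ (Ioo x₁ 1)) (nhds 0) := by
        apply tendsto_const_nhds.congr'
        filter_upwards [eventually_mem_nhdsWithin] with x hx
        exact (hzero x hx).symm
      exact tendsto_nhds_unique ht1 ht2
    have hx₁gt : x₀ < x₁ := lt_of_le_of_ne hx₁ge (fun h => hfx₀ (by rw [h]; exact hfx₁))
    -- Ω x₁ = 0 : zeros of Ω accumulate at x₁ from the left
    have hΩx₁ : Ω x₁ = 0 := by
      have hNB : (nhdsWithin x₁ (Iic x₁) ⊓ Filter.principal {x | Ω x = 0}).NeBot := by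
        rw [inf_principal_neBot_iff]
        intro U hU
        obtain ⟨a, ha, haU⟩ := mem_nhdsLE_iff_exists_Ioc_subset.mp hU
        -- a < x₁; find y ∈ (max a x₀, x₁) with f y ≠ 0
        set a' := max a x₀ with ha'def
        have ha' : a' < x₁ := max_lt ha hx₁gt
        have hnotS : a' ∉ S := fun hmem => absurd (csInf_le hSbdd hmem) (not_le.mpr ha')
        have : ∃ y ∈ Ioo a' 1, f y ≠ 0 := by
          by_contra hy
          push_neg at hy
          exact hnotS ⟨le_max_right a x₀, hy⟩
        obtain ⟨y, hy, hfy⟩ := this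
        have hylt : y < x₁ := by
          rcases lt_trichotomy y x₁ with h | h | h
          · exact h
          · exact absurd (h ▸ hfx₁) hfy
          · exact absurd (hzero y ⟨h, hy.2⟩) hfy
        have hymem : y ∈ Ioo (0:ℝ) 1 := ⟨lt_of_lt_of_le hx₀.1 (le_trans (le_max_right a x₀) hy.1.le), hy.2⟩
        obtain ⟨v, hv, hΩv⟩ := hK y hymem hfy x₁ ⟨hylt, hx₁lt⟩ hfx₁
        refine ⟨v, haU ⟨?_, hv.2⟩, hΩv⟩
        exact lt_of_le_of_lt (le_max_left a x₀) (lt_trans hy.1 hv.1)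
      have ht1 : Tendsto Ω (nhdsWithin x₁ (Iic x₁) ⊓ Filter.principal {x | Ω x = 0}) (nhds (Ω x₁)) := by
        have := (hΩc.continuousAt (isOpen_Ioo.mem_nhds hx₁mem)).tendsto
        exact this.mono_left (le_trans inf_le_left nhdsWithin_le_nhds)
      have ht2 : Tendsto Ω (nhdsWithin x₁ (Iic x₁) ⊓ Filter.principal {x | Ω x = 0}) (nhds 0) := by
        apply tendsto_const_nhds.congr'
        have : {x | Ω x = 0} ∈ nhdsWithin x₁ (Iic x₁) ⊓ Filter.principal {x | Ω x = 0} :=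
          mem_inf_of_right (mem_principal_self _)
        filter_upwards [this] with x hx
        exact hx.symm
      exact tendsto_nhds_unique ht1 ht2
    -- Ω is constant C on (x₁,1), C = Ω x₁ = 0, but C = Cω
    obtain ⟨C, hC⟩ := hconst x₁ 1 (fun x hx => ⟨lt_trans hx₁mem.1 hx.1, hx.2⟩) hzero
    have hCeq : C = Ω x₁ := by
      have ht1 : Tendsto Ω (nhdsWithin x₁ (Ioo x₁ 1)) (nhds (Ω x₁)) :=
        ((hΩc.continuousAt (isOpen_Ioo.mem_nhds hx₁mem)).tendsto).mono_left nhdsWithin_le_nhds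
      have ht2 : Tendsto Ω (nhdsWithin x₁ (Ioo x₁ 1)) (nhds C) := by
        apply tendsto_const_nhds.congr'
        filter_upwards [eventually_mem_nhdsWithin] with x hx
        exact (hC x hx).symm
      exact (tendsto_nhds_unique ht2 ht1)
    have hCCω : C = Cω := by
      have ht2 : Tendsto Ω (nhdsWithin (1:ℝ) (Iio 1)) (nhds C) := by
        apply tendsto_const_nhds.congr'
        filter_upwards [Ioo_mem_nhdsLT (show (1:ℝ) ∈ Ioc x₁ 1 from ⟨hx₁lt, le_refl 1⟩).1] with x hx
        exact (hC x hx).symm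
      exact tendsto_nhds_unique ht2 hΩlim
    exact hCω (by rw [← hCCω, hCeq, hΩx₁])
  -- Case (iii): both zeros and nonzeros accumulate at 1
  push_neg at hcase2
  have hNB : (nhdsWithin (1:ℝ) (Iio 1) ⊓ Filter.principal {x | Ω x = 0}).NeBot := by
    rw [inf_principal_neBot_iff]
    intro U hU
    obtain ⟨a, ha, haU⟩ := mem_nhdsLT_iff_exists_Ioo_subset.mp hU
    set a' := max a (1/2) with ha'def
    have ha'mem : a' ∈ Ioo (0:ℝ) 1 := ⟨lt_of_lt_of_le (by norm_num) (le_max_right a (1/2)), max_lt ha (by norm_num)⟩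
    obtain ⟨y, hy, hfy⟩ := hcase2 a' ha'mem
    have hymem : y ∈ Ioo (0:ℝ) 1 := ⟨lt_trans ha'mem.1 hy.1, hy.2⟩
    obtain ⟨z, hz, hfz⟩ := hcase1 y hymem
    obtain ⟨v, hv, hΩv⟩ := hK y hymem hfy z hz hfz
    refine ⟨v, haU ⟨?_, lt_of_le_of_lt hv.2 hz.2⟩, hΩv⟩
    exact lt_trans (lt_of_le_of_lt (le_max_left a (1/2)) hy.1) hv.1
  have ht1 : Tendsto Ω (nhdsWithin (1:ℝ) (Iio 1) ⊓ Filter.principal {x | Ω x = 0}) (nhds Cω) :=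
    hΩlim.mono_left inf_le_left
  have ht2 : Tendsto Ω (nhdsWithin (1:ℝ) (Iio 1) ⊓ Filter.principal {x | Ω x = 0}) (nhds 0) := by
    apply tendsto_const_nhds.congr'
    filter_upwards [mem_inf_of_right (mem_principal_self {x | Ω x = 0})] with x hx
    exact hx.symm
  exact hCω (tendsto_nhds_unique ht1 ht2)
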